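/- (Identifiability of the Markov-switching discrete Hawkes model.) Let Q ≥ 1 and let θ = (ν, π, μ, α, β) and θ' = (ν', π', μ', α', β') be two parameter sets satisfying: ν_q > 0 and ν'_q > 0 for all q; π and π' are Q×Q row-stochastic matrices; 0 < μ_1 < μ_2 < ⋯ < μ_Q and 0 < μ'_1 < μ'_2 < ⋯ < μ'_Q; α > 0 and α' > 0; β, β' ∈ (0, 1). If p_θ(Y_1 = x, Y_2 = y, Y_3 = z) = p_{θ'}(Y_1 = x, Y_2 = y, Y_3 = z) for every triple (x, y, z) ∈ ℕ³, then ν = ν', π = π', μ = μ', α = α' and β = β'. -/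

import Mathlib

open Finset

/-- Poisson pmf `Pois(x; λ) = e^{-λ} λ^x / x!`. -/
noncomputable def pois (lam : ℝ) (x : ℕ) : ℝ :=
  Real.exp (-lam) * lam ^ x / (Nat.factorial x : ℝ)

/-- Joint pmf of the Markov-switching discrete Hawkes model for hidden states
`z : Fin n → Fin Q` and observations `y` (0-based indexing: `z i`, `y i`
correspond to the paper's `z_{i+1}`, `y_{i+1}`):
`p_θ(z_{1:n}, y_{1:n}) = ν_{z_1} ∏_{k=2}^n π_{z_{k-1} z_k}
  ∏_{k=1}^n Pois(y_k; μ_{z_k} + α ∑_{h=1}^{k-1} β^{h-1} y_{k-h})`. -/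
noncomputable def jointPMF {Q : ℕ} (ν : Fin Q → ℝ) (π : Fin Q → Fin Q → ℝ)
    (μ : Fin Q → ℝ) (α β : ℝ) (n : ℕ) (z : Fin n → Fin Q) (y : ℕ → ℕ) : ℝ :=
  (∏ k : Fin n,
    if k.val = 0 then ν (z k)
    else π (z ⟨k.val - 1, lt_of_le_of_lt (Nat.sub_le _ _) k.isLt⟩) (z k)) *
  ∏ k : Fin n,
    pois (μ (z k) + α * ∑ h ∈ Finset.range k.val, β ^ h * (y (k.val - 1 - h) : ℝ))
      (y k.val)

/-- Observation pmf: `p_θ(y_{1:n}) = ∑_{z_{1:n}} p_θ(z_{1:n}, y_{1:n})`. -/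
noncomputable def obsPMF {Q : ℕ} (ν : Fin Q → ℝ) (π : Fin Q → Fin Q → ℝ)
    (μ : Fin Q → ℝ) (α β : ℝ) (n : ℕ) (y : ℕ → ℕ) : ℝ :=
  ∑ z : Fin n → Fin Q, jointPMF ν π μ α β n z y

/- ### Auxiliary lemmas -/


lemma key_zero (S : Finset ℝ) (hS : ∀ r ∈ S, 0 < r) (F : ℝ → ℝ)
    (h : ∀ x : ℕ, ∑ r ∈ S, F r * r ^ x = 0) : ∀ r ∈ S, F r = 0 := by
  by_contra hc
  push_neg at hc
  obtain ⟨r₀, hr₀S, hr₀⟩ := hc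
  set T : Finset ℝ := S.filter (fun r => F r ≠ 0) with hT
  have hTne : T.Nonempty := ⟨r₀, by simp [hT, hr₀S, hr₀]⟩
  set m : ℝ := T.max' hTne with hm
  have hmS : m ∈ S := (mem_filter.1 (T.max'_mem hTne)).1
  have hmpos : 0 < m := hS m hmS
  have hzero : ∀ x : ℕ, ∑ r ∈ T, F r * (r / m) ^ x = 0 := by
    intro x
    have : ∑ r ∈ T, F r * (r / m) ^ x = (∑ r ∈ S, F r * r ^ x) / m ^ x := by
      rw [Finset.sum_div, ← Finset.sum_filter_of_ne (p := fun r => F r ≠ 0)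
        (f := fun r => F r * r ^ x / m ^ x) (fun r _ hne => by
          intro hF; simp only [hF] at hne; simp at hne)]
      exact Finset.sum_congr rfl (fun r _ => by rw [div_pow]; ring)
    rw [this, h x, zero_div]
  have hlim : Filter.Tendsto (fun x : ℕ => ∑ r ∈ T, F r * (r / m) ^ x)
      Filter.atTop (nhds (F m)) := by
    have : F m = ∑ r ∈ T, (if r = m then F m else 0) := by
      rw [Finset.sum_ite_eq' T m (fun _ => F m)]
      simp [show m ∈ T from T.max'_mem hTne]
    rw [this]
    refine tendsto_finset_sum _ (fun r hr => ?_)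
    by_cases hrm : r = m
    · subst hrm
      simp only [if_pos rfl, div_self hmpos.ne']
      simp only [one_pow, mul_one]; exact tendsto_const_nhds
    · simp only [if_neg hrm]
      have h1 : r / m < 1 := by
        rw [div_lt_one hmpos]
        exact lt_of_le_of_ne (T.le_max' r hr) hrm
      have h0 : 0 ≤ r / m := div_nonneg (hS r (mem_filter.1 hr).1).le hmpos.le
      have := tendsto_pow_atTop_nhds_zero_of_lt_one h0 h1
      simpa using this.const_mul (F r)
  have : F m = 0 := by
    have : (fun x : ℕ => ∑ r ∈ T, F r * (r / m) ^ x) = fun _ => (0:ℝ) := funext hzero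
    exact tendsto_nhds_unique hlim (this ▸ tendsto_const_nhds)
  exact (mem_filter.1 (T.max'_mem hTne)).2 this

lemma mix_match {ι : Type*} [Fintype ι] (c c' ρ ρ' : ι → ℝ)
    (hρ : Function.Injective ρ) (hρ' : Function.Injective ρ')
    (hρpos : ∀ i, 0 < ρ i) (hρ'pos : ∀ i, 0 < ρ' i)
    (h : ∀ x : ℕ, ∑ i, c i * ρ i ^ x = ∑ i, c' i * ρ' i ^ x) :
    (∀ i j, ρ i = ρ' j → c i = c' j) ∧
    (univ.filter (fun i => c i ≠ 0)).image ρ =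
      (univ.filter (fun i => c' i ≠ 0)).image ρ' := by
  classical
  set S : Finset ℝ := univ.image ρ ∪ univ.image ρ' with hSdef
  set F : ℝ → ℝ := fun r =>
    (∑ i, if ρ i = r then c i else 0) - (∑ j, if ρ' j = r then c' j else 0) with hFdef
  have hSpos : ∀ r ∈ S, 0 < r := by
    intro r hr
    rcases mem_union.1 hr with hr | hr <;>
      · obtain ⟨i, -, rfl⟩ := mem_image.1 hr
        first | exact hρpos i | exact hρ'pos i
  have hkey : ∀ r ∈ S, F r = 0 := by
    refine key_zero S hSpos F (fun x => ?_)
    have gen : ∀ (d σ : ι → ℝ), (∀ i, σ i ∈ S) →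
        ∑ r ∈ S, (∑ i, if σ i = r then d i else 0) * r ^ x = ∑ i, d i * σ i ^ x := by
      intro d σ hσ
      calc ∑ r ∈ S, (∑ i, if σ i = r then d i else 0) * r ^ x
          = ∑ r ∈ S, ∑ i, (if σ i = r then d i * r ^ x else 0) := by
            refine Finset.sum_congr rfl fun r _ => ?_
            rw [Finset.sum_mul]
            exact Finset.sum_congr rfl fun i _ => by split <;> simp
        _ = ∑ i, ∑ r ∈ S, (if σ i = r then d i * r ^ x else 0) := Finset.sum_comm
        _ = ∑ i, d i * σ i ^ x := by
            refine Finset.sum_congr rfl fun i _ => ?_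
            rw [Finset.sum_ite_eq S (σ i) (fun r => d i * r ^ x)]
            simp [hσ i]
    have hFx : ∑ r ∈ S, F r * r ^ x = 0 := by
      rw [hFdef]
      simp only [sub_mul, Finset.sum_sub_distrib]
      rw [gen c ρ (fun i => mem_union_left _ (mem_image_of_mem ρ (mem_univ i))),
        gen c' ρ' (fun i => mem_union_right _ (mem_image_of_mem ρ' (mem_univ i))),
        h x, sub_self]
    exact hFx
  constructor
  · intro i j hij
    have hFij := hkey (ρ i) (mem_union_left _ (mem_image_of_mem ρ (mem_univ i)))
    have e1 : (∑ k, if ρ k = ρ i then c k else 0) = c i := by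
      simp [hρ.eq_iff]
    have e2 : (∑ k, if ρ' k = ρ i then c' k else 0) = c' j := by
      rw [hij]; simp [hρ'.eq_iff]
    rw [hFdef] at hFij
    simp only at hFij
    rw [e1, e2] at hFij
    linarith
  · ext r
    simp only [mem_image, mem_filter, mem_univ, true_and]
    constructor
    · rintro ⟨i, hci, rfl⟩
      have hFi := hkey (ρ i) (mem_union_left _ (mem_image_of_mem ρ (mem_univ i)))
      rw [hFdef] at hFi; simp only at hFi
      have e1 : (∑ k, if ρ k = ρ i then c k else 0) = c i := by simp [hρ.eq_iff]
      rw [e1] at hFi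
      have : (∑ k, if ρ' k = ρ i then c' k else 0) ≠ 0 := by
        intro h0; rw [h0] at hFi; exact hci (by linarith)
      obtain ⟨j, -, hj⟩ := Finset.exists_ne_zero_of_sum_ne_zero this
      refine ⟨j, ?_, ?_⟩
      · intro h0; rw [h0] at hj; simp at hj
      · by_contra hne; rw [if_neg hne] at hj; exact hj rfl
    · rintro ⟨j, hcj, rfl⟩
      have hFj := hkey (ρ' j) (mem_union_right _ (mem_image_of_mem ρ' (mem_univ j)))
      rw [hFdef] at hFj; simp only at hFj
      have e2 : (∑ k, if ρ' k = ρ' j then c' k else 0) = c' j := by simp [hρ'.eq_iff]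
      rw [e2] at hFj
      have : (∑ k, if ρ k = ρ' j then c k else 0) ≠ 0 := by
        intro h0; rw [h0] at hFj; exact hcj (by linarith)
      obtain ⟨i, -, hi⟩ := Finset.exists_ne_zero_of_sum_ne_zero this
      refine ⟨i, ?_, ?_⟩
      · intro h0; rw [h0] at hi; simp at hi
      · by_contra hne; rw [if_neg hne] at hi; exact hi rfl

lemma strictMono_eq_of_image_eq {Q : ℕ} (ρ ρ' : Fin Q → ℝ)
    (h : StrictMono ρ) (h' : StrictMono ρ')
    (him : univ.image ρ = univ.image ρ') : ρ = ρ' := by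
  classical
  have hc : (univ.image ρ).card = Q := by
    rw [Finset.card_image_of_injective _ h.injective, card_univ, Fintype.card_fin]
  have e1 := Finset.orderEmbOfFin_unique hc
    (f := ρ) (fun x => mem_image_of_mem ρ (mem_univ x)) h
  have e2 := Finset.orderEmbOfFin_unique hc
    (f := ρ') (fun x => him ▸ mem_image_of_mem ρ' (mem_univ x)) h'
  rw [e1, e2]

lemma hasSum_pois {r : ℝ} (hr : 0 < r) : HasSum (pois r) 1 := by
  have h := ProbabilityTheory.poissonPMFRealSum ⟨r, hr.le⟩
  have : (fun n => ProbabilityTheory.poissonPMFReal ⟨r, hr.le⟩ n) = pois r := by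
    funext n
    simp [ProbabilityTheory.poissonPMFReal, pois]
    rfl
  rw [← this]; exact h

lemma pois_pos {r : ℝ} (hr : 0 < r) (n : ℕ) : 0 < pois r n := by
  unfold pois
  positivity

lemma tsum_mix {ι : Type*} [Fintype ι] (W : ι → ℝ) (r : ι → ℝ) (hr : ∀ i, 0 < r i) :
    ∑' z : ℕ, ∑ i, W i * pois (r i) z = ∑ i, W i := by
  rw [Summable.tsum_finsetSum (fun i _ => ((hasSum_pois (hr i)).mul_left (W i)).summable)]
  exact Finset.sum_congr rfl fun i _ => by
    rw [((hasSum_pois (hr i)).mul_left (W i)).tsum_eq, mul_one]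

lemma pois_mul_factorial (r : ℝ) (x : ℕ) :
    pois r x * (Nat.factorial x : ℝ) = Real.exp (-r) * r ^ x := by
  unfold pois
  field_simp

lemma mix_of_pois {ι : Type*} [Fintype ι] (A A' : ι → ℝ) (r r' : ι → ℝ)
    (h : ∀ x : ℕ, ∑ i, A i * pois (r i) x = ∑ i, A' i * pois (r' i) x) :
    ∀ x : ℕ, ∑ i, (A i * Real.exp (-r i)) * r i ^ x
      = ∑ i, (A' i * Real.exp (-r' i)) * r' i ^ x := by
  intro x
  have h2 := congrArg (· * (Nat.factorial x : ℝ)) (h x)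
  simp only [Finset.sum_mul] at h2
  calc ∑ i, (A i * Real.exp (-r i)) * r i ^ x
      = ∑ i, A i * pois (r i) x * (Nat.factorial x : ℝ) := by
        refine Finset.sum_congr rfl fun i _ => ?_
        have hf : (Nat.factorial x : ℝ) ≠ 0 := Nat.cast_ne_zero.2 (Nat.factorial_ne_zero x)
        simp only [pois]; field_simp
    _ = ∑ i, A' i * pois (r' i) x * (Nat.factorial x : ℝ) := h2
    _ = _ := by
        refine Finset.sum_congr rfl fun i _ => ?_
        have hf : (Nat.factorial x : ℝ) ≠ 0 := Nat.cast_ne_zero.2 (Nat.factorial_ne_zero x)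
        simp only [pois]; field_simp

lemma joint3 {Q : ℕ} (ν : Fin Q → ℝ) (π : Fin Q → Fin Q → ℝ) (μ : Fin Q → ℝ)
    (α β : ℝ) (z : Fin 3 → Fin Q) (y : ℕ → ℕ) :
    jointPMF ν π μ α β 3 z y =
      ν (z 0) * π (z 0) (z 1) * π (z 1) (z 2) *
      (pois (μ (z 0)) (y 0) *
        (pois (μ (z 1) + α * (y 0 : ℝ)) (y 1) *
          pois (μ (z 2) + α * ((y 1 : ℝ) + β * (y 0 : ℝ))) (y 2))) := by
  rw [jointPMF, Fin.prod_univ_three, Fin.prod_univ_three]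
  norm_num [Finset.sum_range_succ]
  exact Or.inl (mul_assoc _ _ _)

lemma obs3 {Q : ℕ} (ν : Fin Q → ℝ) (π : Fin Q → Fin Q → ℝ) (μ : Fin Q → ℝ)
    (α β : ℝ) (y : ℕ → ℕ) :
    obsPMF ν π μ α β 3 y = ∑ q, ∑ l, ∑ m, ν q * π q l * π l m *
      (pois (μ q) (y 0) *
        (pois (μ l + α * (y 0 : ℝ)) (y 1) *
          pois (μ m + α * ((y 1 : ℝ) + β * (y 0 : ℝ))) (y 2))) := by
  classical
  rw [obsPMF]
  have e : ∀ p : Fin Q × Fin Q × Fin Q,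
      jointPMF ν π μ α β 3 ![p.1, p.2.1, p.2.2] y =
      ν p.1 * π p.1 p.2.1 * π p.2.1 p.2.2 *
      (pois (μ p.1) (y 0) *
        (pois (μ p.2.1 + α * (y 0 : ℝ)) (y 1) *
          pois (μ p.2.2 + α * ((y 1 : ℝ) + β * (y 0 : ℝ))) (y 2))) := by
    intro p
    rw [joint3]
    simp
  have hbij : Function.Bijective (fun p : Fin Q × Fin Q × Fin Q =>
      (![p.1, p.2.1, p.2.2] : Fin 3 → Fin Q)) := by
    constructor
    · rintro ⟨a, b, c⟩ ⟨a', b', c'⟩ h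
      have h0 := congrFun h 0
      have h1 := congrFun h 1
      have h2 := congrFun h 2
      simp at h0 h1 h2
      simp [h0, h1, h2]
    · intro f
      refine ⟨(f 0, f 1, f 2), ?_⟩
      funext i
      fin_cases i <;> simp
  rw [← Function.Bijective.sum_comp hbij (fun z => jointPMF ν π μ α β 3 z y)]
  rw [Fintype.sum_prod_type]
  refine Finset.sum_congr rfl fun q _ => ?_
  rw [Fintype.sum_prod_type]
  refine Finset.sum_congr rfl fun l _ => ?_
  exact Finset.sum_congr rfl fun m _ => e (q, l, m)

lemma regroup2 {Q : ℕ} (a : Fin Q → Fin Q → ℝ) (b g : Fin Q → ℝ) :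
    ∑ q, ∑ l, a q l * (b q * g l) = ∑ l, (∑ q, a q l * b q) * g l := by
  rw [Finset.sum_comm]
  exact Finset.sum_congr rfl fun l _ => by
    rw [Finset.sum_mul]
    exact Finset.sum_congr rfl fun q _ => by ring

lemma regroup3 {Q : ℕ} (F : Fin Q → Fin Q → Fin Q → ℝ) (G : Fin Q → ℝ) :
    ∑ q, ∑ l, ∑ m, F q l m * G m = ∑ m, (∑ q, ∑ l, F q l m) * G m := by
  calc ∑ q, ∑ l, ∑ m, F q l m * G m
      = ∑ q, ∑ m, ∑ l, F q l m * G m := by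
        exact Finset.sum_congr rfl fun q _ => Finset.sum_comm
    _ = ∑ m, ∑ q, ∑ l, F q l m * G m := Finset.sum_comm
    _ = ∑ m, (∑ q, ∑ l, F q l m) * G m := by
        refine Finset.sum_congr rfl fun m _ => ?_
        rw [Finset.sum_mul]
        exact Finset.sum_congr rfl fun q _ => (Finset.sum_mul _ _ _).symm

lemma marg3 {Q : ℕ} (ν : Fin Q → ℝ) (π : Fin Q → Fin Q → ℝ) (μ : Fin Q → ℝ)
    (α β : ℝ) (hπsum : ∀ q, ∑ l, π q l = 1) (hμpos : ∀ q, 0 < μ q)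
    (hα : 0 ≤ α) (hβ : 0 ≤ β) (x y : ℕ) :
    ∑' z : ℕ, ∑ q, ∑ l, ∑ m, ν q * π q l * π l m *
        (pois (μ q) x *
          (pois (μ l + α * (x:ℝ)) y * pois (μ m + α * ((y:ℝ) + β * (x:ℝ))) z))
      = ∑ q, ∑ l, (ν q * π q l) * (pois (μ q) x * pois (μ l + α * (x:ℝ)) y) := by
  classical
  have hrate : ∀ p : Fin Q × Fin Q × Fin Q,
      0 < μ p.2.2 + α * ((y:ℝ) + β * (x:ℝ)) := fun p =>
    add_pos_of_pos_of_nonneg (hμpos _)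
      (mul_nonneg hα (add_nonneg (Nat.cast_nonneg _) (mul_nonneg hβ (Nat.cast_nonneg _))))
  have e1 : ∀ z : ℕ,
      (∑ q, ∑ l, ∑ m, ν q * π q l * π l m *
        (pois (μ q) x *
          (pois (μ l + α * (x:ℝ)) y * pois (μ m + α * ((y:ℝ) + β * (x:ℝ))) z)))
      = ∑ p : Fin Q × Fin Q × Fin Q,
          (ν p.1 * π p.1 p.2.1 * π p.2.1 p.2.2 *
            (pois (μ p.1) x * pois (μ p.2.1 + α * (x:ℝ)) y)) *
          pois (μ p.2.2 + α * ((y:ℝ) + β * (x:ℝ))) z := by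
    intro z
    rw [Fintype.sum_prod_type]
    refine Finset.sum_congr rfl fun q _ => ?_
    rw [Fintype.sum_prod_type]
    refine Finset.sum_congr rfl fun l _ => ?_
    exact Finset.sum_congr rfl fun m _ => by ring
  rw [tsum_congr e1, tsum_mix _ _ hrate]
  rw [Fintype.sum_prod_type]
  refine Finset.sum_congr rfl fun q _ => ?_
  rw [Fintype.sum_prod_type]
  refine Finset.sum_congr rfl fun l _ => ?_
  have : ∀ m, ν q * π q l * π l m * (pois (μ q) x * pois (μ l + α * (x:ℝ)) y)
      = ((ν q * π q l) * (pois (μ q) x * pois (μ l + α * (x:ℝ)) y)) * π l m := by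
    intro m; ring
  rw [Finset.sum_congr rfl (fun m _ => this m), ← Finset.mul_sum, hπsum l, mul_one]

lemma marg2 {Q : ℕ} (ν : Fin Q → ℝ) (π : Fin Q → Fin Q → ℝ) (μ : Fin Q → ℝ)
    (α : ℝ) (hπsum : ∀ q, ∑ l, π q l = 1) (hμpos : ∀ q, 0 < μ q)
    (hα : 0 ≤ α) (x : ℕ) :
    ∑' y : ℕ, ∑ q, ∑ l, (ν q * π q l) * (pois (μ q) x * pois (μ l + α * (x:ℝ)) y)
      = ∑ q, ν q * pois (μ q) x := by
  classical
  have hrate : ∀ p : Fin Q × Fin Q, 0 < μ p.2 + α * (x:ℝ) := fun p =>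
    add_pos_of_pos_of_nonneg (hμpos _) (mul_nonneg hα (Nat.cast_nonneg _))
  have e1 : ∀ y : ℕ,
      (∑ q, ∑ l, (ν q * π q l) * (pois (μ q) x * pois (μ l + α * (x:ℝ)) y))
      = ∑ p : Fin Q × Fin Q,
          (ν p.1 * π p.1 p.2 * pois (μ p.1) x) * pois (μ p.2 + α * (x:ℝ)) y := by
    intro y
    rw [Fintype.sum_prod_type]
    refine Finset.sum_congr rfl fun q _ => ?_
    exact Finset.sum_congr rfl fun l _ => by ring
  rw [tsum_congr e1, tsum_mix _ _ hrate]
  rw [Fintype.sum_prod_type]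
  refine Finset.sum_congr rfl fun q _ => ?_
  have : ∀ l, ν q * π q l * pois (μ q) x = (ν q * pois (μ q) x) * π q l := by
    intro l; ring
  rw [Finset.sum_congr rfl (fun l _ => this l), ← Finset.mul_sum, hπsum q, mul_one]


/-- Identifiability of the Markov-switching discrete Hawkes
model: under the positivity, stochasticity and ordering assumptions below,
if the three-step observation pmfs of `θ = (ν, π, μ, α, β)` and
`θ' = (ν', π', μ', α', β')` coincide on all of `ℕ³`, then `θ = θ'`. -/
theorem markov_switching_hawkes_identifiable {Q : ℕ} (hQ : 1 ≤ Q)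
    (ν ν' : Fin Q → ℝ) (π π' : Fin Q → Fin Q → ℝ) (μ μ' : Fin Q → ℝ)
    (α β α' β' : ℝ)
    (hν : ∀ q, 0 < ν q) (hνsum : ∑ q, ν q = 1)
    (hν' : ∀ q, 0 < ν' q) (hν'sum : ∑ q, ν' q = 1)
    (hπ : ∀ q ℓ, 0 ≤ π q ℓ) (hπsum : ∀ q, ∑ ℓ, π q ℓ = 1)
    (hπ' : ∀ q ℓ, 0 ≤ π' q ℓ) (hπ'sum : ∀ q, ∑ ℓ, π' q ℓ = 1)
    (hμpos : ∀ q, 0 < μ q) (hμmono : StrictMono μ)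
    (hμ'pos : ∀ q, 0 < μ' q) (hμ'mono : StrictMono μ')
    (hα : 0 < α) (hα' : 0 < α')
    (hβ0 : 0 < β) (hβ1 : β < 1) (hβ'0 : 0 < β') (hβ'1 : β' < 1)
    (heq : ∀ x y z : ℕ,
      obsPMF ν π μ α β 3 (fun i => if i = 0 then x else if i = 1 then y else z) =
      obsPMF ν' π' μ' α' β' 3
        (fun i => if i = 0 then x else if i = 1 then y else z)) :
    ν = ν' ∧ π = π' ∧ μ = μ' ∧ α = α' ∧ β = β' := by
  classical
  -- three-step pmf equality in expanded form
  have h3 : ∀ x y z : ℕ,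
      (∑ q, ∑ l, ∑ m, ν q * π q l * π l m *
        (pois (μ q) x *
          (pois (μ l + α * (x:ℝ)) y * pois (μ m + α * ((y:ℝ) + β * (x:ℝ))) z)))
      = ∑ q, ∑ l, ∑ m, ν' q * π' q l * π' l m *
        (pois (μ' q) x *
          (pois (μ' l + α' * (x:ℝ)) y * pois (μ' m + α' * ((y:ℝ) + β' * (x:ℝ))) z)) := by
    intro x y z
    have h := heq x y z
    rw [obs3, obs3] at h
    norm_num at h
    exact h
  -- two-step marginal
  have h2 : ∀ x y : ℕ,
      (∑ q, ∑ l, (ν q * π q l) * (pois (μ q) x * pois (μ l + α * (x:ℝ)) y))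
      = ∑ q, ∑ l, (ν' q * π' q l) * (pois (μ' q) x * pois (μ' l + α' * (x:ℝ)) y) := by
    intro x y
    rw [← marg3 ν π μ α β hπsum hμpos hα.le hβ0.le x y,
      ← marg3 ν' π' μ' α' β' hπ'sum hμ'pos hα'.le hβ'0.le x y]
    exact tsum_congr fun z => h3 x y z
  -- one-step marginal
  have h1 : ∀ x : ℕ, (∑ q, ν q * pois (μ q) x) = ∑ q, ν' q * pois (μ' q) x := by
    intro x
    rw [← marg2 ν π μ α hπsum hμpos hα.le x, ← marg2 ν' π' μ' α' hπ'sum hμ'pos hα'.le x]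
    exact tsum_congr fun y => h2 x y
  -- Step 1: μ = μ' and ν = ν'
  have h1' := mix_of_pois ν ν' μ μ' h1
  obtain ⟨hmatch1, him1⟩ := mix_match _ _ _ _ hμmono.injective hμ'mono.injective
    hμpos hμ'pos h1'
  have hfil : (univ.filter (fun q => ν q * Real.exp (-μ q) ≠ 0)) = (univ : Finset (Fin Q)) :=
    Finset.filter_true_of_mem (fun q _ => (mul_pos (hν q) (Real.exp_pos _)).ne')
  have hfil' : (univ.filter (fun q => ν' q * Real.exp (-μ' q) ≠ 0)) = (univ : Finset (Fin Q)) :=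
    Finset.filter_true_of_mem (fun q _ => (mul_pos (hν' q) (Real.exp_pos _)).ne')
  rw [hfil, hfil'] at him1
  have hμeq : μ = μ' := strictMono_eq_of_image_eq μ μ' hμmono hμ'mono him1
  have hνeq : ν = ν' := by
    funext q
    have := hmatch1 q q (congrFun hμeq q)
    rw [← hμeq] at this
    exact mul_right_cancel₀ (Real.exp_ne_zero _) this
  subst hμeq hνeq
  -- weights for the second coordinate
  set w : ℕ → Fin Q → ℝ := fun x l => ∑ q, (ν q * π q l) * pois (μ q) x with hw
  set w' : ℕ → Fin Q → ℝ := fun x l => ∑ q, (ν q * π' q l) * pois (μ q) x with hw'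
  have h2w : ∀ x y : ℕ,
      ∑ l, w x l * pois (μ l + α * (x:ℝ)) y = ∑ l, w' x l * pois (μ l + α' * (x:ℝ)) y := by
    intro x y
    rw [hw, hw']
    simp only
    rw [← regroup2 (fun q l => ν q * π q l) (fun q => pois (μ q) x)
        (fun l => pois (μ l + α * (x:ℝ)) y),
      ← regroup2 (fun q l => ν q * π' q l) (fun q => pois (μ q) x)
        (fun l => pois (μ l + α' * (x:ℝ)) y)]
    exact h2 x y
  have hratepos : ∀ (a : ℝ), 0 ≤ a → ∀ l : Fin Q, 0 < μ l + a :=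
    fun a ha l => add_pos_of_pos_of_nonneg (hμpos l) ha
  have hrinj : ∀ a : ℝ, Function.Injective (fun l : Fin Q => μ l + a) :=
    fun a l l' hll => hμmono.injective (by linarith [add_right_cancel hll])
  have hmm2 : ∀ x : ℕ,
      (∀ i j : Fin Q, μ i + α * (x:ℝ) = μ j + α' * (x:ℝ) →
        w x i * Real.exp (-(μ i + α * (x:ℝ))) = w' x j * Real.exp (-(μ j + α' * (x:ℝ)))) ∧
      (univ.filter (fun l => w x l * Real.exp (-(μ l + α * (x:ℝ))) ≠ 0)).image
          (fun l => μ l + α * (x:ℝ)) =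
        (univ.filter (fun l => w' x l * Real.exp (-(μ l + α' * (x:ℝ))) ≠ 0)).image
          (fun l => μ l + α' * (x:ℝ)) := by
    intro x
    exact mix_match _ _ _ _ (hrinj _) (hrinj _)
      (fun l => hratepos _ (mul_nonneg hα.le (Nat.cast_nonneg _)) l)
      (fun l => hratepos _ (mul_nonneg hα'.le (Nat.cast_nonneg _)) l)
      (mix_of_pois _ _ _ _ (h2w x))
  -- identify the filters
  have hwfil : ∀ (p : Fin Q → Fin Q → ℝ), (∀ q l, 0 ≤ p q l) → ∀ (x : ℕ) (a : ℝ),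
      (univ.filter (fun l =>
        (∑ q, (ν q * p q l) * pois (μ q) x) * Real.exp (-(μ l + a)) ≠ 0))
      = univ.filter (fun l => ∃ q, p q l ≠ 0) := by
    intro p hp x a
    refine Finset.filter_congr fun l _ => ?_
    constructor
    · intro h
      by_contra hall
      push_neg at hall
      apply h
      have : (∑ q, (ν q * p q l) * pois (μ q) x) = 0 :=
        Finset.sum_eq_zero fun q _ => by rw [hall q]; ring
      rw [this, zero_mul]
    · rintro ⟨q, hq⟩
      apply mul_ne_zero _ (Real.exp_ne_zero _)
      have hpos : 0 < ∑ q, (ν q * p q l) * pois (μ q) x := by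
        refine Finset.sum_pos' (fun i _ => ?_) ⟨q, mem_univ q, ?_⟩
        · exact mul_nonneg (mul_nonneg (hν i).le (hp i l)) (pois_pos (hμpos i) x).le
        · exact mul_pos (mul_pos (hν q) (lt_of_le_of_ne (hp q l) (Ne.symm hq)))
            (pois_pos (hμpos q) x)
      exact hpos.ne'
  set L : Finset (Fin Q) := univ.filter (fun l => ∃ q, π q l ≠ 0) with hLdef
  set L' : Finset (Fin Q) := univ.filter (fun l => ∃ q, π' q l ≠ 0) with hL'def
  have him2 : ∀ x : ℕ, L.image (fun l => μ l + α * (x:ℝ))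
      = L'.image (fun l => μ l + α' * (x:ℝ)) := by
    intro x
    rw [hLdef, hL'def, ← hwfil π hπ x (α * (x:ℝ)), ← hwfil π' hπ' x (α' * (x:ℝ))]
    exact (hmm2 x).2
  have hLne : L.Nonempty := by
    have q0 : Fin Q := ⟨0, hQ⟩
    have : ∃ l, π q0 l ≠ 0 := by
      by_contra hall
      push_neg at hall
      have : (∑ l, π q0 l) = 0 := Finset.sum_eq_zero fun l _ => hall l
      rw [hπsum q0] at this
      exact one_ne_zero this
    obtain ⟨l, hl⟩ := this
    exact ⟨l, by rw [hLdef]; exact mem_filter.2 ⟨mem_univ l, ⟨q0, hl⟩⟩⟩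
  have hL'ne : L'.Nonempty := by
    have q0 : Fin Q := ⟨0, hQ⟩
    have : ∃ l, π' q0 l ≠ 0 := by
      by_contra hall
      push_neg at hall
      have : (∑ l, π' q0 l) = 0 := Finset.sum_eq_zero fun l _ => hall l
      rw [hπ'sum q0] at this
      exact one_ne_zero this
    obtain ⟨l, hl⟩ := this
    exact ⟨l, by rw [hL'def]; exact mem_filter.2 ⟨mem_univ l, ⟨q0, hl⟩⟩⟩
  -- a small helper to extract maxima
  have hmaxim : ∀ (s s' : Finset (Fin Q)) (hs : s.Nonempty) (hs' : s'.Nonempty)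
      (f g : Fin Q → ℝ), Monotone f → Monotone g → s.image f = s'.image g →
      f (s.max' hs) = g (s'.max' hs') := by
    intro s s' hs hs' f g hf hg hima
    have e1 := Finset.max'_image hf s (hs.image f)
    have e2 := Finset.max'_image hg s' (hs'.image g)
    rw [← e1, ← e2]
    congr 1
  -- x = 0 gives equality of the max indices
  have him0 : L.image μ = L'.image μ := by
    have := him2 0
    simpa using this
  have hmax : L.max' hLne = L'.max' hL'ne := by
    have := hmaxim L L' hLne hL'ne μ μ hμmono.monotone hμmono.monotone him0
    exact hμmono.injective this
  -- x = 1 gives α = α'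
  have hαα' : α = α' := by
    have h1' := him2 1
    have e1 : (fun l => μ l + α * ((1:ℕ):ℝ)) = fun l => μ l + α := by
      funext l; norm_num
    have e2 : (fun l => μ l + α' * ((1:ℕ):ℝ)) = fun l => μ l + α' := by
      funext l; norm_num
    rw [e1, e2] at h1'
    have := hmaxim L L' hLne hL'ne _ _ (hμmono.monotone.add_const α)
      (hμmono.monotone.add_const α') h1'
    rw [hmax] at this
    linarith
  subst hαα'
  -- β step: use the third coordinate with y = 0
  set A : ℕ → Fin Q → ℝ := fun x m =>
    ∑ q, ∑ l, (ν q * π q l * π l m) * (pois (μ q) x * pois (μ l + α * (x:ℝ)) 0) with hA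
  set A' : ℕ → Fin Q → ℝ := fun x m =>
    ∑ q, ∑ l, (ν q * π' q l * π' l m) * (pois (μ q) x * pois (μ l + α * (x:ℝ)) 0) with hA'
  have h3w : ∀ x z : ℕ,
      ∑ m, A x m * pois (μ m + α * (β * (x:ℝ))) z
        = ∑ m, A' x m * pois (μ m + α * (β' * (x:ℝ))) z := by
    intro x z
    have h := h3 x 0 z
    norm_num at h
    rw [hA, hA']
    simp only
    rw [← regroup3 (fun q l m => (ν q * π q l * π l m) *
        (pois (μ q) x * pois (μ l + α * (x:ℝ)) 0)) (fun m => pois (μ m + α * (β * (x:ℝ))) z),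
      ← regroup3 (fun q l m => (ν q * π' q l * π' l m) *
        (pois (μ q) x * pois (μ l + α * (x:ℝ)) 0)) (fun m => pois (μ m + α * (β' * (x:ℝ))) z)]
    calc ∑ q, ∑ l, ∑ m, ((ν q * π q l * π l m) *
            (pois (μ q) x * pois (μ l + α * (x:ℝ)) 0)) * pois (μ m + α * (β * (x:ℝ))) z
        = ∑ q, ∑ l, ∑ m, ν q * π q l * π l m * (pois (μ q) x *
            (pois (μ l + α * (x:ℝ)) 0 * pois (μ m + α * (β * (x:ℝ))) z)) := by
          refine Finset.sum_congr rfl fun q _ => Finset.sum_congr rfl fun l _ =>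
            Finset.sum_congr rfl fun m _ => by ring
      _ = ∑ q, ∑ l, ∑ m, ν q * π' q l * π' l m * (pois (μ q) x *
            (pois (μ l + α * (x:ℝ)) 0 * pois (μ m + α * (β' * (x:ℝ))) z)) := h
      _ = _ := by
          refine Finset.sum_congr rfl fun q _ => Finset.sum_congr rfl fun l _ =>
            Finset.sum_congr rfl fun m _ => by ring
  have hAfil : ∀ (p : Fin Q → Fin Q → ℝ), (∀ q l, 0 ≤ p q l) → ∀ (x : ℕ) (a : ℝ),
      (univ.filter (fun m =>
        (∑ q, ∑ l, (ν q * p q l * p l m) * (pois (μ q) x * pois (μ l + α * (x:ℝ)) 0))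
          * Real.exp (-(μ m + a)) ≠ 0))
      = univ.filter (fun m => ∃ q l, p q l ≠ 0 ∧ p l m ≠ 0) := by
    intro p hp x a
    refine Finset.filter_congr fun m _ => ?_
    constructor
    · intro h
      by_contra hall
      push_neg at hall
      apply h
      have : (∑ q, ∑ l, (ν q * p q l * p l m) *
          (pois (μ q) x * pois (μ l + α * (x:ℝ)) 0)) = 0 := by
        refine Finset.sum_eq_zero fun q _ => Finset.sum_eq_zero fun l _ => ?_
        rcases Classical.em (p q l = 0) with h0 | h0
        · rw [h0]; ring
        · rw [hall q l h0]; ring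
      rw [this, zero_mul]
    · rintro ⟨q, l, hq, hl⟩
      apply mul_ne_zero _ (Real.exp_ne_zero _)
      have hterm : ∀ i j : Fin Q, 0 ≤ (ν i * p i j * p j m) *
          (pois (μ i) x * pois (μ j + α * (x:ℝ)) 0) := by
        intro i j
        have h2pos := pois_pos (add_pos_of_pos_of_nonneg (hμpos j)
          (mul_nonneg hα.le (Nat.cast_nonneg x))) 0
        exact mul_nonneg (mul_nonneg (mul_nonneg (hν i).le (hp i j)) (hp j m))
          (mul_nonneg (pois_pos (hμpos i) x).le h2pos.le)
      have hpos : 0 < ∑ q, ∑ l, (ν q * p q l * p l m) *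
          (pois (μ q) x * pois (μ l + α * (x:ℝ)) 0) := by
        refine Finset.sum_pos' (fun i _ => Finset.sum_nonneg fun j _ => hterm i j)
          ⟨q, mem_univ q, ?_⟩
        refine Finset.sum_pos' (fun j _ => hterm q j) ⟨l, mem_univ l, ?_⟩
        have h2pos := pois_pos (add_pos_of_pos_of_nonneg (hμpos l)
          (mul_nonneg hα.le (Nat.cast_nonneg x))) 0
        exact mul_pos (mul_pos (mul_pos (hν q) (lt_of_le_of_ne (hp q l) (Ne.symm hq)))
          (lt_of_le_of_ne (hp l m) (Ne.symm hl)))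
          (mul_pos (pois_pos (hμpos q) x) h2pos)
      exact hpos.ne'
  have hmm3 : ∀ x : ℕ,
      (univ.filter (fun m => A x m * Real.exp (-(μ m + α * (β * (x:ℝ)))) ≠ 0)).image
          (fun m => μ m + α * (β * (x:ℝ))) =
        (univ.filter (fun m => A' x m * Real.exp (-(μ m + α * (β' * (x:ℝ)))) ≠ 0)).image
          (fun m => μ m + α * (β' * (x:ℝ))) := by
    intro x
    exact (mix_match _ _ _ _ (hrinj _) (hrinj _)
      (fun m => hratepos _ (mul_nonneg hα.le (mul_nonneg hβ0.le (Nat.cast_nonneg _))) m)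
      (fun m => hratepos _ (mul_nonneg hα.le (mul_nonneg hβ'0.le (Nat.cast_nonneg _))) m)
      (mix_of_pois _ _ _ _ (h3w x))).2
  set M : Finset (Fin Q) := univ.filter (fun m => ∃ q l, π q l ≠ 0 ∧ π l m ≠ 0) with hMdef
  set M' : Finset (Fin Q) := univ.filter (fun m => ∃ q l, π' q l ≠ 0 ∧ π' l m ≠ 0) with hM'def
  have him3 : ∀ x : ℕ, M.image (fun m => μ m + α * (β * (x:ℝ)))
      = M'.image (fun m => μ m + α * (β' * (x:ℝ))) := by
    intro x
    rw [hMdef, hM'def, ← hAfil π hπ x (α * (β * (x:ℝ))), ← hAfil π' hπ' x (α * (β' * (x:ℝ)))]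
    exact hmm3 x
  have hMne : M.Nonempty := by
    have q0 : Fin Q := ⟨0, hQ⟩
    have hl : ∃ l, π q0 l ≠ 0 := by
      by_contra hall; push_neg at hall
      have : (∑ l, π q0 l) = 0 := Finset.sum_eq_zero fun l _ => hall l
      rw [hπsum q0] at this; exact one_ne_zero this
    obtain ⟨l, hl⟩ := hl
    have hm : ∃ m, π l m ≠ 0 := by
      by_contra hall; push_neg at hall
      have : (∑ m, π l m) = 0 := Finset.sum_eq_zero fun m _ => hall m
      rw [hπsum l] at this; exact one_ne_zero this
    obtain ⟨m, hm⟩ := hm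
    exact ⟨m, by rw [hMdef]; exact mem_filter.2 ⟨mem_univ m, ⟨q0, l, hl, hm⟩⟩⟩
  have hM'ne : M'.Nonempty := by
    have q0 : Fin Q := ⟨0, hQ⟩
    have hl : ∃ l, π' q0 l ≠ 0 := by
      by_contra hall; push_neg at hall
      have : (∑ l, π' q0 l) = 0 := Finset.sum_eq_zero fun l _ => hall l
      rw [hπ'sum q0] at this; exact one_ne_zero this
    obtain ⟨l, hl⟩ := hl
    have hm : ∃ m, π' l m ≠ 0 := by
      by_contra hall; push_neg at hall
      have : (∑ m, π' l m) = 0 := Finset.sum_eq_zero fun m _ => hall m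
      rw [hπ'sum l] at this; exact one_ne_zero this
    obtain ⟨m, hm⟩ := hm
    exact ⟨m, by rw [hM'def]; exact mem_filter.2 ⟨mem_univ m, ⟨q0, l, hl, hm⟩⟩⟩
  have him30 : M.image μ = M'.image μ := by
    have := him3 0
    simpa using this
  have hmax3 : M.max' hMne = M'.max' hM'ne :=
    hμmono.injective (hmaxim M M' hMne hM'ne μ μ hμmono.monotone hμmono.monotone him30)
  have hββ' : β = β' := by
    have h1' := him3 1
    have e1 : (fun m => μ m + α * (β * ((1:ℕ):ℝ))) = fun m => μ m + α * β := by
      funext m; norm_num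
    have e2 : (fun m => μ m + α * (β' * ((1:ℕ):ℝ))) = fun m => μ m + α * β' := by
      funext m; norm_num
    rw [e1, e2] at h1'
    have := hmaxim M M' hMne hM'ne _ _ (hμmono.monotone.add_const (α * β))
      (hμmono.monotone.add_const (α * β')) h1'
    rw [hmax3] at this
    have : α * β = α * β' := by linarith
    exact mul_left_cancel₀ hα.ne' this
  subst hββ'
  -- π step
  have hwl : ∀ x l, w x l = w' x l := by
    intro x l
    have := (hmm2 x).1 l l rfl
    exact mul_right_cancel₀ (Real.exp_ne_zero _) this
  have hπeq : π = π' := by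
    funext q l
    have hq : ∀ x : ℕ, ∑ i, (ν i * π i l) * pois (μ i) x
        = ∑ i, (ν i * π' i l) * pois (μ i) x := by
      intro x
      have := hwl x l
      rw [hw, hw'] at this
      exact this
    obtain ⟨m3, -⟩ := mix_match _ _ _ _ hμmono.injective hμmono.injective hμpos hμpos
      (mix_of_pois _ _ _ _ hq)
    have := m3 q q rfl
    have h2 := mul_right_cancel₀ (Real.exp_ne_zero _) this
    exact mul_left_cancel₀ (hν q).ne' h2
  exact ⟨rfl, hπeq, rfl, rfl, rfl⟩
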